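/- Let v₁,…,v_{d+2} ∈ ℤ^d be d+2 points such that v₁,…,v_{d+1} are affinely independent, and suppose λ₁,…,λ_{d+2} ∈ ℤ, not all zero, satisfy λ₁ṽ₁ + ⋯ + λ_{d+2}ṽ_{d+2} = 0 in ℤ^{d+1} and |λᵢ| = d!·vol(Δᵢ) for every i, where Δᵢ is the convex hull of {v₁,…,v_{d+2}} \ {vᵢ}. Then the sum of the positive coefficients satisfies Σ_{i : λᵢ > 0} λᵢ = d!·vol(Δ_A), where Δ_A is the convex hull of {v₁,…,v_{d+2}}. -/

import Mathlib

open MeasureTheory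

/-- The lift of `v ∈ ℤ^d` to `ṽ = (v, 1) ∈ ℤ^{d+1}`. -/
def liftZ {d : ℕ} (u : Fin d → ℤ) : Fin (d + 1) → ℤ := Fin.snoc u 1

/-- The coercion of an integer point to a real point. -/
def castR {d : ℕ} (u : Fin d → ℤ) : Fin d → ℝ := fun i => (u i : ℝ)

/-- Membership in the convex hull of the range of a finite family via weights. -/
lemma mem_convexHull_range_iff {n : ℕ} {ι : Type*} [Fintype ι] (f : ι → (Fin n → ℝ))
    (x : Fin n → ℝ) :
    x ∈ convexHull ℝ (Set.range f) ↔
      ∃ μ : ι → ℝ, (∀ i, 0 ≤ μ i) ∧ ∑ i, μ i = 1 ∧ ∑ i, μ i • f i = x := by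
  classical
  constructor
  · intro hx
    rw [convexHull_range_eq_exists_affineCombination] at hx
    obtain ⟨s, w, hw0, hw1, hx⟩ := hx
    refine ⟨fun i => if i ∈ s then w i else 0, fun i => ?_, ?_, ?_⟩
    · dsimp only
      split
      · exact hw0 _ ‹_›
      · exact le_refl 0
    · simp only [Finset.sum_ite_mem, Finset.univ_inter, hw1]
    · rw [← hx, Finset.affineCombination_eq_linear_combination _ _ _ hw1]
      simp only [ite_smul, zero_smul, Finset.sum_ite_mem, Finset.univ_inter]
  · rintro ⟨μ, h0, h1, rfl⟩
    have h := Finset.centerMass_mem_convexHull (Finset.univ (α := ι))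
      (w := μ) (z := f) (fun i _ => h0 i) (by rw [h1]; norm_num)
      (fun i _ => Set.mem_range_self i)
    rwa [Finset.centerMass_eq_of_sum_1 _ _ h1] at h

/-- Extract index-based weights from membership in the hull of an image set. -/
lemma exists_weights_of_mem_hull {n N : ℕ} (v : Fin N → Fin n → ℤ) (s : Set (Fin N))
    (x : Fin n → ℝ) (hx : x ∈ convexHull ℝ (castR '' (v '' s))) :
    ∃ μ : Fin N → ℝ, (∀ j, 0 ≤ μ j) ∧ (∀ j, j ∉ s → μ j = 0) ∧ ∑ j, μ j = 1 ∧
      ∑ j, μ j • castR (v j) = x := by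
  classical
  have hset : castR '' (v '' s) = Set.range (fun j : s => castR (v j)) := by
    rw [Set.image_image, Set.image_eq_range]
  rw [hset, mem_convexHull_range_iff] at hx
  obtain ⟨ν, hν0, hν1, hνx⟩ := hx
  have key : ∀ {M : Type} [AddCommMonoid M] (g : Fin N → M), (∀ j ∉ s, g j = 0) →
      ∑ j, g j = ∑ j : s, g (↑j) := by
    intro M _ g hg
    have h1 : ∑ j ∈ Finset.univ.filter (· ∈ s), g j = ∑ j : s, g (↑j) :=
      Finset.sum_subtype _ (fun j => by simp) g
    rw [← h1]
    exact (Finset.sum_filter_of_ne (fun x _ hx => by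
      by_contra h; exact hx (hg x h))).symm
  refine ⟨fun j => if h : j ∈ s then ν ⟨j, h⟩ else 0, fun j => ?_, fun j hj => dif_neg hj,
    ?_, ?_⟩
  · by_cases h : j ∈ s
    · simp only [dif_pos h]; exact hν0 _
    · simp only [dif_neg h]
      exact le_refl 0
  · rw [key _ (fun j hj => dif_neg hj)]
    rw [← hν1]
    exact Finset.sum_congr rfl (fun j _ => by simp [dif_pos j.2])
  · rw [key _ (fun j hj => by simp only [dif_neg hj, zero_smul])]
    rw [← hνx]
    exact Finset.sum_congr rfl (fun j _ => by simp [dif_pos j.2])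

/-- A nonnegative combination with weights supported on `s` summing to 1 lies in the hull. -/
lemma sum_mem_hull {n N : ℕ} (v : Fin N → Fin n → ℤ) (s : Set (Fin N))
    (t : Finset (Fin N)) (ht : ↑t ⊆ s) (μ : Fin N → ℝ) (h0 : ∀ j ∈ t, 0 ≤ μ j)
    (h1 : ∑ j ∈ t, μ j = 1) :
    ∑ j ∈ t, μ j • castR (v j) ∈ convexHull ℝ (castR '' (v '' s)) := by
  have h := Finset.centerMass_mem_convexHull t h0 (by rw [h1]; norm_num)
    (z := fun j => castR (v j))
    (fun j hj => Set.mem_image_of_mem castR (Set.mem_image_of_mem v (ht hj)))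
  rwa [Finset.centerMass_eq_of_sum_1 _ _ h1] at h

/-- The lifts of the first `d+1` points are linearly independent over `ℝ`. -/
lemma lift_linearIndependent {d : ℕ} (v : Fin (d + 2) → Fin d → ℤ)
    (haff : AffineIndependent ℚ fun j : Fin (d + 1) =>
      fun i => ((v (Fin.castSucc j) i : ℚ))) :
    LinearIndependent ℝ fun j : Fin (d + 1) =>
      (fun k => ((liftZ (v (Fin.castSucc j)) k : ℤ) : ℝ)) := by
  classical
  set q : Fin (d + 1) → Fin d → ℚ := fun j => fun i => (v (Fin.castSucc j) i : ℚ) with hq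
  have hvs : LinearIndependent ℚ fun j : {x : Fin (d + 1) // x ≠ 0} => q ↑j -ᵥ q 0 :=
    (affineIndependent_iff_linearIndependent_vsub ℚ _ 0).mp haff
  have hu : LinearIndependent ℚ fun i : Fin d => q (Fin.succ i) - q 0 := by
    have h := hvs.comp
      (fun i : Fin d => (⟨Fin.succ i, Fin.succ_ne_zero i⟩ : {x : Fin (d + 1) // x ≠ 0}))
      (fun a b hab => by
        have : Fin.succ a = Fin.succ b := congrArg Subtype.val hab
        exact Fin.succ_injective _ this)
    simpa [Function.comp_def, vsub_eq_sub] using h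
  set Dz : Matrix (Fin d) (Fin d) ℤ :=
    Matrix.of (fun i k => v (Fin.castSucc (Fin.succ i)) k - v (Fin.castSucc 0) k) with hDz
  have hdetq : Dz.det ≠ 0 := by
    intro h0
    have hmap : (Dz.map (Int.castRingHom ℚ)).det = 0 := by
      rw [← RingHom.mapMatrix_apply, ← RingHom.map_det, h0]; simp
    obtain ⟨cq, hcq0, hcqv⟩ := Matrix.exists_vecMul_eq_zero_iff.mpr hmap
    apply hcq0
    have := Fintype.linearIndependent_iff.mp hu cq ?_
    · funext i; exact this i
    · funext k
      have h1 := congrFun hcqv k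
      simp only [Matrix.vecMul, dotProduct, Matrix.map_apply, Matrix.of_apply,
        Pi.zero_apply] at h1
      simp only [Finset.sum_apply, Pi.smul_apply, Pi.sub_apply, smul_eq_mul, Pi.zero_apply]
      rw [← h1]
      apply Finset.sum_congr rfl
      intro i _
      simp [hq, hDz]
  have hdetr : (Dz.map (Int.castRingHom ℝ)).det ≠ 0 := by
    rw [← RingHom.mapMatrix_apply, ← RingHom.map_det]
    intro h
    apply hdetq
    have h' : ((Dz.det : ℤ) : ℝ) = 0 := by simpa using h
    exact_mod_cast h'
  rw [Fintype.linearIndependent_iff]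
  intro c hc
  have hsum : ∑ j, c j = 0 := by
    have h := congrFun hc (Fin.last d)
    simpa [Finset.sum_apply, liftZ, Fin.snoc_last] using h
  have hcoord : ∀ i : Fin d, ∑ j, c j * ((v (Fin.castSucc j) i : ℤ) : ℝ) = 0 := by
    intro i
    have h := congrFun hc (Fin.castSucc i)
    simpa [Finset.sum_apply, liftZ, Fin.snoc_castSucc] using h
  have hsucc : ∑ i, c (Fin.succ i) = -c 0 := by
    have := hsum
    rw [Fin.sum_univ_succ] at this
    linarith
  have hvm : Matrix.vecMul (fun i => c (Fin.succ i)) (Dz.map (Int.castRingHom ℝ)) = 0 := by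
    funext k
    simp only [Matrix.vecMul, dotProduct, Matrix.map_apply, Matrix.of_apply,
      Pi.zero_apply, hDz, Int.coe_castRingHom]
    have h1 := hcoord k
    rw [Fin.sum_univ_succ] at h1
    have : ∀ i, c (Fin.succ i) * ((v (Fin.castSucc (Fin.succ i)) k -
        v (Fin.castSucc 0) k : ℤ) : ℝ) =
        c (Fin.succ i) * ((v (Fin.castSucc (Fin.succ i)) k : ℤ) : ℝ) -
        c (Fin.succ i) * ((v (Fin.castSucc 0) k : ℤ) : ℝ) := by
      intro i; push_cast; ring
    rw [Finset.sum_congr rfl (fun i _ => this i), Finset.sum_sub_distrib,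
      ← Finset.sum_mul, hsucc]
    linarith
  have hc0 : (fun i => c (Fin.succ i)) = 0 := Matrix.eq_zero_of_vecMul_eq_zero hdetr hvm
  intro j
  refine Fin.cases ?_ ?_ j
  · have hz : ∑ i : Fin d, c (Fin.succ i) = 0 :=
      Finset.sum_eq_zero (fun i _ => congrFun hc0 i)
    rw [hz] at hsucc
    linarith
  · intro i; exact congrFun hc0 i

/-- Any real linear relation among the lifts is proportional to `lam`. -/
lemma gamma_prop {d : ℕ} (v : Fin (d + 2) → Fin d → ℤ)
    (haff : AffineIndependent ℚ fun j : Fin (d + 1) =>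
      fun i => ((v (Fin.castSucc j) i : ℚ)))
    (lam : Fin (d + 2) → ℤ) (hne : lam ≠ 0)
    (hzero : ∑ i, lam i • liftZ (v i) = 0)
    (γ : Fin (d + 2) → ℝ) (hγv : ∑ j, γ j • castR (v j) = 0) (hγs : ∑ j, γ j = 0) :
    ∃ c : ℝ, ∀ j, γ j = c * (lam j : ℝ) := by
  classical
  set L : Fin (d + 2) → Fin (d + 1) → ℝ := fun j => fun k => ((liftZ (v j) k : ℤ) : ℝ) with hL
  have hLind : LinearIndependent ℝ (fun j : Fin (d + 1) => L (Fin.castSucc j)) :=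
    lift_linearIndependent v haff
  have hlift : ∀ δ : Fin (d + 2) → ℝ, (∑ j, δ j • castR (v j) = 0) → (∑ j, δ j = 0) →
      ∑ j, δ j • L j = 0 := by
    intro δ h1 h2
    funext k
    simp only [Finset.sum_apply, Pi.smul_apply, smul_eq_mul, Pi.zero_apply]
    refine Fin.lastCases ?_ ?_ k
    · simpa [hL, liftZ, Fin.snoc_last] using h2
    · intro i
      have h := congrFun h1 i
      simpa [Finset.sum_apply, castR, hL, liftZ, Fin.snoc_castSucc] using h
  have hlamL : ∑ j, (lam j : ℝ) • L j = 0 := by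
    funext k
    have h := congrFun hzero k
    simp only [Finset.sum_apply, Pi.smul_apply, smul_eq_mul, Pi.zero_apply, hL] at h ⊢
    exact_mod_cast h
  have hlast : (lam (Fin.last (d + 1)) : ℝ) ≠ 0 := by
    intro h0
    have h0' : lam (Fin.last (d + 1)) = 0 := by exact_mod_cast h0
    have hrel : ∑ j : Fin (d + 1), (lam (Fin.castSucc j) : ℝ) • L (Fin.castSucc j) = 0 := by
      rw [Fin.sum_univ_castSucc] at hlamL
      simpa [h0'] using hlamL
    have hz := Fintype.linearIndependent_iff.mp hLind _ hrel
    apply hne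
    funext j
    refine Fin.lastCases ?_ ?_ j
    · exact h0'
    · intro i; exact_mod_cast hz i
  refine ⟨γ (Fin.last (d + 1)) / (lam (Fin.last (d + 1)) : ℝ), ?_⟩
  set c : ℝ := γ (Fin.last (d + 1)) / (lam (Fin.last (d + 1)) : ℝ) with hcdef
  set δ : Fin (d + 2) → ℝ := fun j => γ j - c * (lam j : ℝ) with hδ
  have hδL : ∑ j, δ j • L j = 0 := by
    have h1 : ∑ j, γ j • L j = 0 := hlift γ hγv hγs
    have : ∀ j, δ j • L j = γ j • L j - c • ((lam j : ℝ) • L j) := by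
      intro j; rw [hδ]; simp [sub_smul, mul_smul]
    rw [Finset.sum_congr rfl (fun j _ => this j), Finset.sum_sub_distrib, h1,
      ← Finset.smul_sum, hlamL, smul_zero, sub_zero]
  have hδlast : δ (Fin.last (d + 1)) = 0 := by
    rw [hδ]
    simp only [hcdef]
    field_simp
    ring
  have hrel : ∑ j : Fin (d + 1), δ (Fin.castSucc j) • L (Fin.castSucc j) = 0 := by
    rw [Fin.sum_univ_castSucc] at hδL
    simpa [hδlast] using hδL
  have hz := Fintype.linearIndependent_iff.mp hLind _ hrel
  intro j
  have hδj : δ j = 0 := by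
    refine Fin.lastCases ?_ ?_ j
    · exact hδlast
    · intro i; exact hz i
  have h2 : γ j - c * (lam j : ℝ) = 0 := by
    have h3 := hδj
    simp only [hδ] at h3
    exact h3
  linarith

theorem sum_of_positive_coefficients_eq_normalized_volume
    (d : ℕ) (v : Fin (d + 2) → Fin d → ℤ)
    (haff : AffineIndependent ℚ fun j : Fin (d + 1) =>
      fun i => ((v (Fin.castSucc j) i : ℚ)))
    (lam : Fin (d + 2) → ℤ) (hne : lam ≠ 0)
    (hzero : ∑ i, lam i • liftZ (v i) = 0)
    (hvol : ∀ i, (((lam i).natAbs : ℝ)) = (d.factorial : ℝ) *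
      (volume (convexHull ℝ (castR '' (v '' {j | j ≠ i})))).toReal) :
    ((∑ i ∈ Finset.univ.filter fun i => 0 < lam i, lam i : ℤ) : ℝ)
      = (d.factorial : ℝ) * (volume (convexHull ℝ (castR '' Set.range v))).toReal := by
  classical
  set S : Finset (Fin (d + 2)) := Finset.univ.filter (fun i => 0 < lam i) with hSdef
  set Δ : Fin (d + 2) → Set (Fin d → ℝ) :=
    fun i => convexHull ℝ (castR '' (v '' {j | j ≠ i})) with hΔ
  have hzInt : ∀ k, ∑ i, lam i * liftZ (v i) k = 0 := by
    intro k
    have h := congrFun hzero k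
    simpa [Finset.sum_apply] using h
  have hsumInt : ∑ i, lam i = 0 := by
    simpa [liftZ, Fin.snoc_last] using hzInt (Fin.last d)
  have hs0 : ∑ j, ((lam j : ℝ)) = 0 := by exact_mod_cast hsumInt
  have hv0 : ∑ j, (lam j : ℝ) • castR (v j) = 0 := by
    funext i
    simp only [Finset.sum_apply, Pi.smul_apply, smul_eq_mul, Pi.zero_apply, castR]
    have h' : ∑ j, lam j * v j i = 0 := by
      simpa [liftZ, Fin.snoc_castSucc] using hzInt (Fin.castSucc i)
    exact_mod_cast h'
  have hSne : S.Nonempty := by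
    rw [Finset.nonempty_iff_ne_empty]
    intro hS
    have hall : ∀ i, lam i ≤ 0 := by
      intro i
      by_contra hpos
      push_neg at hpos
      have hiS : i ∈ S := by simp [hSdef, hpos]
      rw [hS] at hiS
      exact absurd hiS (Finset.notMem_empty i)
    have hz : ∀ i ∈ Finset.univ, lam i = 0 :=
      (Finset.sum_eq_zero_iff_of_nonpos (fun i _ => hall i)).mp hsumInt
    exact hne (funext fun i => hz i (Finset.mem_univ i))
  have hUnion : convexHull ℝ (castR '' Set.range v) = ⋃ i ∈ S, Δ i := by
    apply Set.Subset.antisymm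
    · intro x hx
      obtain ⟨μ, hμ0, -, hμ1, hμx⟩ := exists_weights_of_mem_hull v Set.univ x
        (by rwa [Set.image_univ])
      obtain ⟨i₀, hi₀S, hmin⟩ := Finset.exists_min_image S (fun j => μ j / (lam j : ℝ)) hSne
      have hl0 : (0 : ℝ) < (lam i₀ : ℝ) := by
        have h := (Finset.mem_filter.mp hi₀S).2; exact_mod_cast h
      set t : ℝ := μ i₀ / (lam i₀ : ℝ) with htdef
      have ht0 : 0 ≤ t := div_nonneg (hμ0 _) hl0.le
      set ν : Fin (d + 2) → ℝ := fun j => μ j - t * (lam j : ℝ) with hν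
      have hν0 : ∀ j, 0 ≤ ν j := by
        intro j
        by_cases hj : 0 < lam j
        · have hjS : j ∈ S := by simp [hSdef, hj]
          have hlj : (0 : ℝ) < (lam j : ℝ) := by exact_mod_cast hj
          have hmin' := hmin j hjS
          have hle : t * (lam j : ℝ) ≤ μ j := by
            rw [← le_div_iff₀ hlj]
            exact hmin'
          simp only [hν]
          linarith
        · push_neg at hj
          have hlj : (lam j : ℝ) ≤ 0 := by exact_mod_cast hj
          have hle : t * (lam j : ℝ) ≤ 0 := mul_nonpos_iff.mpr (Or.inl ⟨ht0, hlj⟩)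
          simp only [hν]
          linarith [hμ0 j]
      have hν1 : ∑ j, ν j = 1 := by
        simp only [hν]
        rw [Finset.sum_sub_distrib, ← Finset.mul_sum, hs0, mul_zero, sub_zero, hμ1]
      have hνi₀ : ν i₀ = 0 := by
        simp only [hν, htdef]
        rw [div_mul_cancel₀ _ hl0.ne', sub_self]
      have hνx : ∑ j, ν j • castR (v j) = x := by
        have hrw : ∀ j, ν j • castR (v j) =
            μ j • castR (v j) - t • ((lam j : ℝ) • castR (v j)) := by
          intro j; simp only [hν]; rw [sub_smul, mul_smul]
        rw [Finset.sum_congr rfl (fun j _ => hrw j), Finset.sum_sub_distrib,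
          ← Finset.smul_sum, hv0, smul_zero, sub_zero, hμx]
      have herase : ∑ j ∈ Finset.univ.erase i₀, ν j • castR (v j) = x := by
        have h := Finset.add_sum_erase Finset.univ (fun j => ν j • castR (v j))
          (Finset.mem_univ i₀)
        simp only [hνi₀, zero_smul, zero_add] at h
        exact h.trans hνx
      have herase1 : ∑ j ∈ Finset.univ.erase i₀, ν j = 1 := by
        have h := Finset.add_sum_erase Finset.univ ν (Finset.mem_univ i₀)
        rw [hνi₀, zero_add] at h
        exact h.trans hν1
      have hx' : x ∈ Δ i₀ := by
        simp only [hΔ]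
        rw [← herase]
        exact sum_mem_hull v {j | j ≠ i₀} _
          (fun j hj => (Finset.mem_erase.mp (Finset.mem_coe.mp hj)).1)
          ν (fun j _ => hν0 j) herase1
      exact Set.mem_biUnion hi₀S hx'
    · refine Set.iUnion₂_subset fun i _ => ?_
      simp only [hΔ]
      exact convexHull_mono (Set.image_mono (Set.image_subset_range v _))
  have hnull : ∀ i ∈ S, ∀ i' ∈ S, i ≠ i' → volume (Δ i ∩ Δ i') = 0 := by
    intro i hi i' hi' hii'
    have hli : 0 < lam i := (Finset.mem_filter.mp hi).2
    have hli' : 0 < lam i' := (Finset.mem_filter.mp hi').2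
    set s2 : Set (Fin (d + 2)) := {j | j ≠ i ∧ j ≠ i'} with hs2
    have hsub : Δ i ∩ Δ i' ⊆ convexHull ℝ (castR '' (v '' s2)) := by
      rintro x ⟨hxi, hxi'⟩
      simp only [hΔ] at hxi hxi'
      obtain ⟨α, hα0, hαz, hα1, hαx⟩ := exists_weights_of_mem_hull v {j | j ≠ i} x hxi
      obtain ⟨β, hβ0, hβz, hβ1, hβx⟩ := exists_weights_of_mem_hull v {j | j ≠ i'} x hxi'
      obtain ⟨c, hc⟩ := gamma_prop v haff lam hne hzero (fun j => α j - β j)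
        (by
          show ∑ j, (α j - β j) • castR (v j) = 0
          have hrw : ∀ j, (α j - β j) • castR (v j) =
              α j • castR (v j) - β j • castR (v j) := fun j => sub_smul _ _ _
          rw [Finset.sum_congr rfl fun j _ => hrw j, Finset.sum_sub_distrib, hαx, hβx,
            sub_self])
        (by
          show ∑ j, (α j - β j) = 0
          rw [Finset.sum_sub_distrib, hα1, hβ1, sub_self])
      have hαi : α i = 0 := hαz i (by simp)
      have hβi' : β i' = 0 := hβz i' (by simp)
      have hcle : c ≤ 0 := by
        have h := hc i
        simp only [hαi, zero_sub] at h
        have hlir : (0 : ℝ) < (lam i : ℝ) := by exact_mod_cast hli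
        nlinarith [hβ0 i]
      have hcge : 0 ≤ c := by
        have h := hc i'
        simp only [hβi', sub_zero] at h
        have hlir : (0 : ℝ) < (lam i' : ℝ) := by exact_mod_cast hli'
        nlinarith [hα0 i']
      have hc0 : c = 0 := le_antisymm hcle hcge
      have hαβ : ∀ j, α j = β j := by
        intro j
        have h := hc j
        simp only [hc0, zero_mul] at h
        linarith
      have hαi' : α i' = 0 := by rw [hαβ i']; exact hβi'
      set t2 : Finset (Fin (d + 2)) := (Finset.univ.erase i).erase i' with ht2
      have hmem : ∀ j ∈ t2, j ∈ s2 := by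
        intro j hj
        obtain ⟨h1, h2⟩ := Finset.mem_erase.mp hj
        exact ⟨(Finset.mem_erase.mp h2).1, h1⟩
      have hi'mem : i' ∈ Finset.univ.erase i := Finset.mem_erase.mpr ⟨hii'.symm, Finset.mem_univ i'⟩
      have hsum_t2 : ∑ j ∈ t2, α j = 1 := by
        have e1 := Finset.add_sum_erase Finset.univ α (Finset.mem_univ i)
        have e2 := Finset.add_sum_erase (Finset.univ.erase i) α hi'mem
        rw [hαi, zero_add] at e1
        rw [hαi', zero_add] at e2
        rw [e2, e1, hα1]
      have hx_t2 : ∑ j ∈ t2, α j • castR (v j) = x := by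
        have e1 := Finset.add_sum_erase Finset.univ (fun j => α j • castR (v j))
          (Finset.mem_univ i)
        have e2 := Finset.add_sum_erase (Finset.univ.erase i) (fun j => α j • castR (v j))
          hi'mem
        simp only [hαi, hαi', zero_smul, zero_add] at e1 e2
        rw [e2, e1, hαx]
      rw [← hx_t2]
      exact sum_mem_hull v s2 t2 (fun j hj => hmem j (Finset.mem_coe.mp hj)) α
        (fun j _ => hα0 j) hsum_t2
    refine measure_mono_null hsub ?_
    rcases isEmpty_or_nonempty s2 with he | hne2
    · have hempty : s2 = ∅ := Set.isEmpty_coe_sort.mp he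
      simp [hempty]
    · have hfin2 : s2.toFinset = (Finset.univ.erase i).erase i' := by
        ext j
        simp [hs2, Finset.mem_erase, and_comm]
      have hcard : Fintype.card s2 = d := by
        rw [← Set.toFinset_card, hfin2,
          Finset.card_erase_of_mem (Finset.mem_erase.mpr ⟨hii'.symm, Finset.mem_univ i'⟩),
          Finset.card_erase_of_mem (Finset.mem_univ i), Finset.card_univ, Fintype.card_fin]
        omega
      have hd1 : 1 ≤ d := by
        have hpos := Fintype.card_pos (α := s2)
        omega
      have htop : affineSpan ℝ (castR '' (v '' s2)) ≠ ⊤ := by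
        intro htop
        have hset : castR '' (v '' s2) = Set.range (fun j : s2 => castR (v j)) := by
          rw [Set.image_image, Set.image_eq_range]
        have hrk : Module.finrank ℝ
            (vectorSpan ℝ (Set.range (fun j : s2 => castR (v j)))) ≤ d - 1 :=
          finrank_vectorSpan_range_le ℝ _ (by rw [hcard]; omega)
        rw [← hset, ← direction_affineSpan, htop, AffineSubspace.direction_top,
          finrank_top, Module.finrank_pi, Fintype.card_fin] at hrk
        omega
      exact measure_mono_null (convexHull_subset_affineSpan _)
        (Measure.addHaar_affineSubspace volume _ htop)
  have hfinΔ : ∀ i, volume (Δ i) ≠ ⊤ := by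
    intro i
    simp only [hΔ]
    exact ((((Set.toFinite _).image _).image _).isCompact_convexHull (𝕜 := ℝ).measure_lt_top).ne
  have hmeasΔ : ∀ i, NullMeasurableSet (Δ i) volume := by
    intro i
    simp only [hΔ]
    exact (((Set.toFinite _).image _).image
      _).isCompact_convexHull (𝕜 := ℝ).isClosed.measurableSet.nullMeasurableSet
  have hvolU : volume (convexHull ℝ (castR '' Set.range v)) = ∑ i ∈ S, volume (Δ i) := by
    rw [hUnion]
    exact measure_biUnion_finset₀
      (fun i hi i' hi' h => hnull i (Finset.mem_coe.mp hi) i' (Finset.mem_coe.mp hi') h)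
      (fun i _ => hmeasΔ i)
  calc ((∑ i ∈ S, lam i : ℤ) : ℝ)
      = ∑ i ∈ S, ((lam i : ℝ)) := by push_cast; rfl
    _ = ∑ i ∈ S, (((lam i).natAbs : ℝ)) := by
        refine Finset.sum_congr rfl fun i hi => ?_
        have hpos : 0 < lam i := (Finset.mem_filter.mp hi).2
        rw [Nat.cast_natAbs, abs_of_pos (by exact_mod_cast hpos)]
    _ = ∑ i ∈ S, (d.factorial : ℝ) * (volume (Δ i)).toReal := by
        refine Finset.sum_congr rfl fun i _ => ?_
        simp only [hΔ]
        exact hvol i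
    _ = (d.factorial : ℝ) * ∑ i ∈ S, (volume (Δ i)).toReal := by rw [Finset.mul_sum]
    _ = (d.factorial : ℝ) * (∑ i ∈ S, volume (Δ i)).toReal := by
        rw [ENNReal.toReal_sum (fun i _ => hfinΔ i)]
    _ = (d.factorial : ℝ) * (volume (convexHull ℝ (castR '' Set.range v))).toReal := by
        rw [hvolU]
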